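/- If γ_S(n) ≥ g(n+1) for all n ∈ ℕ for an increasing homeomorphism g : ℝ₊ → ℝ₊, then for every nonempty finite D ⊆ Γ and every λ > 1: Card(∂_S D) ≥ (1 − 1/λ)·Card(D)/g⁻¹(λ·Card(D)). -/

import Mathlib

open Set Filter

/-- The ball of radius `n` in the word metric: elements expressible as a product
of at most `n` elements of `S`. -/
def wordBall {G : Type*} [Group G] (S : Set G) (n : ℕ) : Set G :=
  {x | ∃ l : List G, l.length ≤ n ∧ (∀ s ∈ l, s ∈ S) ∧ l.prod = x}

/-- The growth function `γ_S(n) = Card(B_S(n))`. -/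
noncomputable def growth {G : Type*} [Group G] (S : Set G) (n : ℕ) : ℕ :=
  (wordBall S n).ncard

/-- The word norm `‖x‖_S`. -/
noncomputable def wordNorm {G : Type*} [Group G] (S : Set G) (x : G) : ℕ :=
  sInf {n | x ∈ wordBall S n}

/-- The reverse growth function `φ_S(t) = min {n | γ_S(n) ≥ t}`. -/
noncomputable def phiS {G : Type*} [Group G] (S : Set G) (t : ℝ) : ℕ :=
  sInf {n | t ≤ (growth S n : ℝ)}

/-- The interior boundary `∂_S D`. -/
def intBoundary {G : Type*} [Group G] (S : Set G) (D : Set G) : Set G :=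
  {x ∈ D | ∃ s ∈ S, s * x ∉ D}

/-- The exterior boundary `∂'_S D`. -/
def extBoundary {G : Type*} [Group G] (S : Set G) (D : Set G) : Set G :=
  {x | x ∉ D ∧ ∃ s ∈ S, s * x ∈ D}

section aux

open scoped Classical

variable {G : Type*} [Group G] {S : Set G}

lemma one_mem_wordBall (n : ℕ) : (1 : G) ∈ wordBall S n :=
  ⟨[], by simp, by simp, by simp⟩

lemma wordBall_zero : wordBall S 0 = {(1 : G)} := by
  ext x
  constructor
  · rintro ⟨l, hl, -, rfl⟩
    simp only [Nat.le_zero, List.length_eq_zero_iff] at hl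
    simp [hl]
  · rintro rfl; exact one_mem_wordBall 0

lemma wordBall_succ_subset (n : ℕ) :
    wordBall S (n + 1) ⊆ wordBall S n ∪ Set.image2 (· * ·) S (wordBall S n) := by
  rintro x ⟨l, hl, hmem, rfl⟩
  cases l with
  | nil => exact Or.inl (one_mem_wordBall n)
  | cons a t =>
    right
    refine ⟨a, hmem a (by simp), t.prod, ⟨t, ?_, fun s hs => hmem s (by simp [hs]), rfl⟩, by simp⟩
    simpa using hl

lemma wordBall_finite (hS : S.Finite) (n : ℕ) : (wordBall S n).Finite := by
  induction n with
  | zero => rw [wordBall_zero]; exact Set.finite_singleton 1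
  | succ n ih =>
    exact ((ih.union (hS.image2 (· * ·) ih)).subset (wordBall_succ_subset n))

lemma exists_mem_wordBall (hSsym : ∀ s ∈ S, s⁻¹ ∈ S) (hSgen : Subgroup.closure S = ⊤)
    (x : G) : ∃ n, x ∈ wordBall S n := by
  have hx : x ∈ Subgroup.closure S := hSgen ▸ Subgroup.mem_top x
  induction hx using Subgroup.closure_induction with
  | mem y hy => exact ⟨1, [y], by simp, by simpa using hy, by simp⟩
  | one => exact ⟨0, one_mem_wordBall 0⟩
  | mul y z hy hz ihy ihz =>
    obtain ⟨m, ly, hly, hmy, rfl⟩ := ihy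
    obtain ⟨k, lz, hlz, hmz, rfl⟩ := ihz
    refine ⟨m + k, ly ++ lz, by simpa using Nat.add_le_add hly hlz, ?_, by simp⟩
    intro s hs
    rcases List.mem_append.mp hs with h | h
    · exact hmy s h
    · exact hmz s h
  | inv y hy ihy =>
    obtain ⟨m, l, hl, hm, rfl⟩ := ihy
    refine ⟨m, (l.map Inv.inv).reverse, by simpa using hl, ?_, (List.prod_inv_reverse l).symm⟩
    intro s hs
    simp only [List.mem_reverse, List.mem_map] at hs
    obtain ⟨a, ha, rfl⟩ := hs
    exact hSsym a (hm a ha)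

lemma growth_large [Infinite G] (hS : S.Finite) (hSsym : ∀ s ∈ S, s⁻¹ ∈ S)
    (hSgen : Subgroup.closure S = ⊤) (t : ℝ) : ∃ n, t ≤ (growth S n : ℝ) := by
  obtain ⟨s, hs⟩ := Infinite.exists_subset_card_eq G ⌈t⌉₊
  choose f hf using exists_mem_wordBall hSsym hSgen (S := S)
  refine ⟨s.sup f, ?_⟩
  have hsub : (↑s : Set G) ⊆ wordBall S (s.sup f) := by
    intro x hx
    obtain ⟨l, hl, hm, hp⟩ := hf x
    exact ⟨l, hl.trans (Finset.le_sup (by simpa using hx)), hm, hp⟩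
  have : s.card ≤ growth S (s.sup f) := by
    rw [← Set.ncard_coe_finset]
    exact Set.ncard_le_ncard hsub (wordBall_finite hS _)
  calc t ≤ (⌈t⌉₊ : ℝ) := Nat.le_ceil t
    _ ≤ _ := by exact_mod_cast hs ▸ this

/-- Key lemma: for `g` in the ball of radius `n`, the number of `x ∈ D` with
`g * x ∉ D` is at most `n * |∂D|`. -/
lemma card_moved_le {D : Set G} (hD : D.Finite) (hB : (intBoundary S D).Finite)
    {n : ℕ} {g : G} (hg : g ∈ wordBall S n) :
    (hD.toFinset.filter (fun x => g * x ∉ D)).card ≤ n * hB.toFinset.card := by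
  obtain ⟨l, hlen, hls, rfl⟩ := hg
  set A : G → Set ℕ := fun x => {k | (l.drop k).prod * x ∈ D} with hA
  have key : ∀ x ∈ hD.toFinset.filter (fun x => l.prod * x ∉ D),
      sInf (A x) ∈ A x ∧ sInf (A x) ≠ 0 ∧ sInf (A x) ≤ l.length := by
    intro x hx
    simp only [Finset.mem_filter, Set.Finite.mem_toFinset] at hx
    have hmem : l.length ∈ A x := by
      simp only [hA, Set.mem_setOf_eq, List.drop_length, List.prod_nil, one_mul]
      exact hx.1
    refine ⟨Nat.sInf_mem ⟨_, hmem⟩, ?_, Nat.sInf_le hmem⟩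
    intro h0
    have := Nat.sInf_mem ⟨_, hmem⟩
    rw [h0] at this
    simp only [hA, Set.mem_setOf_eq, List.drop_zero] at this
    exact hx.2 this
  have hmaps : ∀ x ∈ hD.toFinset.filter (fun x => l.prod * x ∉ D),
      (sInf (A x) - 1, (l.drop (sInf (A x))).prod * x) ∈
        Finset.range n ×ˢ hB.toFinset := by
    intro x hx
    obtain ⟨hk, hk0, hkle⟩ := key x hx
    set k := sInf (A x) with hkdef
    have hk1 : k - 1 < l.length := by omega
    have hdrop : l.drop (k - 1) = l[k - 1] :: l.drop k := by
      have := List.drop_eq_getElem_cons hk1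
      rwa [show k - 1 + 1 = k from by omega] at this
    have hknot : k - 1 ∉ A x := Nat.notMem_of_lt_sInf (by omega)
    have hyD : (l.drop k).prod * x ∈ D := hk
    have hsy : l[k - 1] * ((l.drop k).prod * x) ∉ D := by
      intro h
      apply hknot
      simp only [hA, Set.mem_setOf_eq, hdrop, List.prod_cons, mul_assoc]
      exact h
    rw [Finset.mem_product, Finset.mem_range, Set.Finite.mem_toFinset]
    exact ⟨by omega, hyD, l[k - 1], hls _ (List.getElem_mem hk1), hsy⟩
  have hinj : Set.InjOn (fun x => (sInf (A x) - 1, (l.drop (sInf (A x))).prod * x))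
      ↑(hD.toFinset.filter (fun x => l.prod * x ∉ D)) := by
    intro x hx x' hx' heq
    obtain ⟨-, hk0, -⟩ := key x (by simpa using hx)
    obtain ⟨-, hk0', -⟩ := key x' (by simpa using hx')
    simp only [Prod.mk.injEq] at heq
    have hkk : sInf (A x) = sInf (A x') := by omega
    rw [hkk] at heq
    exact mul_left_cancel heq.2
  calc (hD.toFinset.filter (fun x => l.prod * x ∉ D)).card
      ≤ (Finset.range n ×ˢ hB.toFinset).card :=
        Finset.card_le_card_of_injOn _ hmaps hinj
    _ = n * hB.toFinset.card := by rw [Finset.card_product, Finset.card_range]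

end aux

set_option maxHeartbeats 1000000 in
theorem stmt_9 {G : Type*} [Group G] [Infinite G] (S : Set G) (hSfin : S.Finite)
    (hSsym : ∀ s ∈ S, s⁻¹ ∈ S) (hSgen : Subgroup.closure S = ⊤)
    (g ginv : ℝ → ℝ)
    (hg_mono : StrictMonoOn g (Ici 0)) (hg_cont : ContinuousOn g (Ici 0))
    (hg_zero : g 0 = 0)
    (hg_maps : MapsTo g (Ici 0) (Ici 0)) (hg_surj : SurjOn g (Ici 0) (Ici 0))
    (hinv_left : ∀ r ∈ Ici (0 : ℝ), ginv (g r) = r)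
    (hinv_right : ∀ t ∈ Ici (0 : ℝ), g (ginv t) = t)
    (hgrowth : ∀ n : ℕ, g (n + 1) ≤ (growth S n : ℝ)) :
    ∀ (D : Set G), D.Finite → D.Nonempty → ∀ lam : ℝ, 1 < lam →
      ((intBoundary S D).ncard : ℝ) ≥
        (1 - 1 / lam) * (D.ncard : ℝ) / ginv (lam * (D.ncard : ℝ)) := by
  classical
  intro D hD hDne lam hlam
  have hBfin : (intBoundary S D).Finite := hD.subset (fun x hx => hx.1)
  set d : ℝ := (D.ncard : ℝ) with hd
  have hd1 : 1 ≤ d := by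
    have : 0 < D.ncard := (Set.ncard_pos hD).mpr hDne
    rw [hd]; exact_mod_cast this
  have hd0 : (0:ℝ) < d := lt_of_lt_of_le one_pos hd1
  have hl0 : (0:ℝ) < lam := by linarith
  -- minimal n with lam * d ≤ growth S n
  have hne : ∃ m : ℕ, lam * d ≤ (growth S m : ℝ) := growth_large hSfin hSsym hSgen _
  obtain ⟨n, hn, hmin⟩ : ∃ n : ℕ, lam * d ≤ (growth S n : ℝ) ∧
      ∀ m < n, ¬ (lam * d ≤ (growth S m : ℝ)) :=
    ⟨Nat.find hne, Nat.find_spec hne, fun m hm => Nat.find_min hne hm⟩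
  have hlamd : 1 < lam * d := by nlinarith
  have hn0 : n ≠ 0 := by
    intro h
    rw [h] at hn
    have hg0 : growth S 0 = 1 := by
      rw [growth, wordBall_zero]; exact Set.ncard_singleton 1
    rw [hg0] at hn
    push_cast at hn
    linarith
  have hprev : (growth S (n - 1) : ℝ) < lam * d := by
    have := hmin (n - 1) (by omega)
    linarith [not_le.mp this]
  have hgn : g n ≤ (growth S (n - 1) : ℝ) := by
    have h := hgrowth (n - 1)
    have h1 : 1 ≤ n := by omega
    have hcast : ((n - 1 : ℕ) : ℝ) + 1 = (n : ℝ) := by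
      rw [Nat.cast_sub h1, Nat.cast_one]; ring
    rwa [hcast] at h
  -- ginv (lam * d) > n
  have hlamd0 : (0:ℝ) ≤ lam * d := by nlinarith
  obtain ⟨r, hr0, hgr⟩ := hg_surj (show lam * d ∈ Ici (0:ℝ) from hlamd0)
  have hginv : ginv (lam * d) = r := by rw [← hgr, hinv_left r hr0]
  have hnR0 : (0:ℝ) < (n : ℝ) := by exact_mod_cast Nat.pos_of_ne_zero hn0
  have hnr : (n : ℝ) < r := by
    by_contra hcon
    push_neg at hcon
    have hgle : g r ≤ g ((n : ℝ)) :=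
      hg_mono.monotoneOn hr0 (show (n:ℝ) ∈ Ici (0:ℝ) from le_of_lt hnR0) hcon
    rw [hgr] at hgle
    linarith
  -- Finset setup
  set Df := hD.toFinset with hDf
  set Bf := (wordBall_finite hSfin n).toFinset with hBf
  set bf := hBfin.toFinset with hbf
  have hDcard : (Df.card : ℝ) = d := by
    rw [hd, Set.ncard_eq_toFinset_card D hD]
  have hBcard : Bf.card = growth S n :=
    (Set.ncard_eq_toFinset_card _ _).symm
  -- double counting
  have hperx : ∀ x ∈ Df, (Bf.filter (fun g0 => g0 * x ∈ D)).card ≤ Df.card := by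
    intro x hx
    apply Finset.card_le_card_of_injOn (fun g0 => g0 * x)
    · intro g0 hg0
      simp only [Finset.coe_filter, Finset.mem_coe, Finset.mem_filter, Set.mem_setOf_eq] at hg0
      simpa [hDf, Set.Finite.mem_toFinset] using hg0.2
    · intro a _ b _ hab
      exact mul_right_cancel hab
  have hsum1 : ∑ g0 ∈ Bf, (Df.filter (fun x => g0 * x ∈ D)).card ≤ Df.card * Df.card := by
    have hswap : ∑ g0 ∈ Bf, (Df.filter (fun x => g0 * x ∈ D)).card
        = ∑ x ∈ Df, (Bf.filter (fun g0 => g0 * x ∈ D)).card := by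
      simp only [Finset.card_filter]
      exact Finset.sum_comm
    rw [hswap]
    calc ∑ x ∈ Df, (Bf.filter (fun g0 => g0 * x ∈ D)).card
        ≤ ∑ _x ∈ Df, Df.card := Finset.sum_le_sum hperx
      _ = Df.card * Df.card := by rw [Finset.sum_const, smul_eq_mul]
  have hT : Bf.card * Df.card ≤ Df.card * Df.card
      + ∑ g0 ∈ Bf, (Df.filter (fun x => g0 * x ∉ D)).card := by
    calc Bf.card * Df.card = ∑ _g0 ∈ Bf, Df.card := by
          rw [Finset.sum_const, smul_eq_mul]
      _ = ∑ g0 ∈ Bf, ((Df.filter (fun x => g0 * x ∈ D)).card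
            + (Df.filter (fun x => g0 * x ∉ D)).card) := by
          refine Finset.sum_congr rfl fun g0 _ => ?_
          exact (Finset.card_filter_add_card_filter_not _).symm
      _ = (∑ g0 ∈ Bf, (Df.filter (fun x => g0 * x ∈ D)).card)
            + ∑ g0 ∈ Bf, (Df.filter (fun x => g0 * x ∉ D)).card :=
          Finset.sum_add_distrib
      _ ≤ _ := Nat.add_le_add_right hsum1 _
  have hT2 : ∑ g0 ∈ Bf, (Df.filter (fun x => g0 * x ∉ D)).card
      ≤ Bf.card * (n * bf.card) := by
    calc ∑ g0 ∈ Bf, (Df.filter (fun x => g0 * x ∉ D)).card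
        ≤ ∑ _g0 ∈ Bf, n * bf.card := by
          refine Finset.sum_le_sum fun g0 hg0 => ?_
          exact card_moved_le hD hBfin
            (by simpa [hBf, Set.Finite.mem_toFinset] using hg0)
      _ = Bf.card * (n * bf.card) := by rw [Finset.sum_const, smul_eq_mul]
  have hcomb : Bf.card * Df.card ≤ Df.card * Df.card + Bf.card * (n * bf.card) :=
    hT.trans (Nat.add_le_add_left hT2 _)
  -- pass to the reals
  set β : ℝ := (Bf.card : ℝ) with hβdef
  set b : ℝ := (bf.card : ℝ) with hbdef
  have hbcard : ((intBoundary S D).ncard : ℝ) = b := by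
    rw [hbdef, hbf, Set.ncard_eq_toFinset_card _ hBfin]
  have hnR : lam * d ≤ β := by rw [hβdef, hBcard]; exact hn
  have hβpos : (0:ℝ) < β := by nlinarith
  have hb0 : (0:ℝ) ≤ b := by rw [hbdef]; positivity
  have hkeyR : β * d ≤ d * d + β * ((n : ℝ) * b) := by
    have := hcomb
    have hx : (Bf.card : ℝ) * (Df.card : ℝ)
        ≤ (Df.card : ℝ) * (Df.card : ℝ) + (Bf.card : ℝ) * ((n : ℝ) * (bf.card : ℝ)) := by
      exact_mod_cast this
    rwa [hDcard] at hx
  have hstep : d * (lam - 1) ≤ lam * ((n : ℝ) * b) := by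
    nlinarith [mul_le_mul_of_nonneg_right hnR hd0.le,
      mul_le_mul_of_nonneg_left hkeyR hl0.le, hβpos, hd0, hb0, hnR0]
  -- conclude
  rw [ge_iff_le, hbcard]
  have hnum : (0:ℝ) ≤ (1 - 1 / lam) * d := by
    have : 1 / lam ≤ 1 := by rw [div_le_one hl0]; linarith
    nlinarith
  calc (1 - 1 / lam) * d / ginv (lam * d)
      ≤ (1 - 1 / lam) * d / (n : ℝ) := by
        apply div_le_div_of_nonneg_left hnum hnR0
        rw [hginv]; linarith
    _ ≤ b := by
        rw [div_le_iff₀ hnR0]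
        have heq : (1 - 1 / lam) * d = d * (lam - 1) / lam := by
          field_simp
        rw [heq, div_le_iff₀ hl0]
        calc d * (lam - 1) ≤ lam * ((n : ℝ) * b) := hstep
          _ = b * (n : ℝ) * lam := by ring
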